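/- arXiv:2605.02556 — 4 statements merged into one kernel-verified Lean document; each statement's English description precedes it below -/
import Mathlib

section
/- Let d₁ and d₂ be positive integers and let J be a linear map from ℝ^{d₂} to the space of linear endomorphisms of ℝ^{d₁} such that for every λ ∈ ℝ^{d₂} the operator J_λ is skew-adjoint with respect to the Euclidean inner product (i.e. ⟨J_λ x, y⟩ = −⟨x, J_λ y⟩ for all x, y ∈ ℝ^{d₁}), and such that J_λ is bijective for every λ ≠ 0. Then d₂ < d₁. -/
open RealInnerProductSpace

/-- On a Métivier group, the dimension of the second layer is strictly smaller
than the dimension of the first layer: if `J : ℝ^{d₂} → End(ℝ^{d₁})` is a linear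
family of skew-adjoint endomorphisms that are bijective for every nonzero
parameter, then `d₂ < d₁`. -/
theorem metivier_dim_lt (d₁ d₂ : ℕ) (hd₁ : 0 < d₁) (hd₂ : 0 < d₂)
    (J : EuclideanSpace ℝ (Fin d₂) →ₗ[ℝ]
      (EuclideanSpace ℝ (Fin d₁) →ₗ[ℝ] EuclideanSpace ℝ (Fin d₁)))
    (hskew : ∀ (lam : EuclideanSpace ℝ (Fin d₂)) (x y : EuclideanSpace ℝ (Fin d₁)),
      ⟪J lam x, y⟫ = - ⟪x, J lam y⟫)
    (hbij : ∀ lam : EuclideanSpace ℝ (Fin d₂), lam ≠ 0 → Function.Bijective (J lam)) :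
    d₂ < d₁ := by
  -- Fix a nonzero vector x
  set x : EuclideanSpace ℝ (Fin d₁) := EuclideanSpace.single ⟨0, hd₁⟩ 1 with hx
  have hxne : x ≠ 0 := by
    intro h
    have := congrArg (fun v => v ⟨0, hd₁⟩) h
    simp [hx, EuclideanSpace.single_apply] at this
  -- The map λ ↦ J λ x
  let L : EuclideanSpace ℝ (Fin d₂) →ₗ[ℝ] EuclideanSpace ℝ (Fin d₁) :=
    { toFun := fun lam => J lam x
      map_add' := fun a b => by simp
      map_smul' := fun c a => by simp }
  -- L lands in (span x)ᗮ
  have hmem : ∀ lam, L lam ∈ (ℝ ∙ x)ᗮ := by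
    intro lam
    rw [Submodule.mem_orthogonal_singleton_iff_inner_left]
    have h := hskew lam x x
    have h2 : ⟪J lam x, x⟫ = ⟪x, J lam x⟫ := real_inner_comm _ _
    have : ⟪J lam x, x⟫ = 0 := by
      rw [h2] at h; linarith
    simpa [L] using this
  -- injectivity of L
  have hinj : Function.Injective (L.codRestrict _ hmem) := by
    rw [← LinearMap.ker_eq_bot, Submodule.eq_bot_iff]
    intro lam hlam
    by_contra hne
    have hz : J lam x = 0 := by
      have := congrArg (Subtype.val) hlam
      simpa [L] using this
    exact hxne ((hbij lam hne).injective (by simpa using hz))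
  have h1 : d₂ ≤ Module.finrank ℝ ((ℝ ∙ x)ᗮ) := by
    have := LinearMap.finrank_le_finrank_of_injective hinj
    simpa using this
  have h2 : Module.finrank ℝ ((ℝ ∙ x)ᗮ) = d₁ - 1 := by
    haveI : Fact (Module.finrank ℝ (EuclideanSpace ℝ (Fin d₁)) = (d₁ - 1) + 1) :=
      ⟨by simp; omega⟩
    have := Submodule.finrank_orthogonal_span_singleton (𝕜 := ℝ) (n := d₁ - 1) hxne
    simpa using this
  omega
end

section
/- Consider the two-step group model on ℝ^{d₁} × ℝ^{d₂}, and assume in addition that the range of ω spans ℝ^{d₂}. Let χ : ℝ^{d₁} × ℝ^{d₂} → ℝ be continuous, strictly positive, and multiplicative for the group law, i.e. χ(g·h) = χ(g)·χ(h) for all g, h. Then there exists a vector v ∈ ℝ^{d₁} such that χ(x,u) = exp(⟨v,x⟩) for all (x,u) ∈ ℝ^{d₁} × ℝ^{d₂}; in particular χ is trivial on the second layer, χ(0,u) = 1 for all u. -/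
open RealInnerProductSpace

/-- The two-step group product on `ℝ^{d₁} × ℝ^{d₂}`:
`(x,u)·(y,s) = (x + y, u + s + (1/2) ω(x,y))`. -/
noncomputable def gmul {d₁ d₂ : ℕ}
    (ω : EuclideanSpace ℝ (Fin d₁) →ₗ[ℝ]
      (EuclideanSpace ℝ (Fin d₁) →ₗ[ℝ] EuclideanSpace ℝ (Fin d₂)))
    (a b : EuclideanSpace ℝ (Fin d₁) × EuclideanSpace ℝ (Fin d₂)) :
    EuclideanSpace ℝ (Fin d₁) × EuclideanSpace ℝ (Fin d₂) :=
  (a.1 + b.1, a.2 + b.2 + (2⁻¹ : ℝ) • ω a.1 b.1)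

/-- Every continuous positive character of the two-step group model (whose bracket
spans the whole second layer) is of the form `χ(x,u) = exp⟨v,x⟩`; in particular
it is trivial on the second layer. -/
theorem positive_character_form (d₁ d₂ : ℕ) (hd₁ : 0 < d₁) (hd₂ : 0 < d₂)
    (ω : EuclideanSpace ℝ (Fin d₁) →ₗ[ℝ]
      (EuclideanSpace ℝ (Fin d₁) →ₗ[ℝ] EuclideanSpace ℝ (Fin d₂)))
    (halt : ∀ x : EuclideanSpace ℝ (Fin d₁), ω x x = 0)
    (hspan : Submodule.span ℝ
      (Set.range fun p : EuclideanSpace ℝ (Fin d₁) × EuclideanSpace ℝ (Fin d₁) =>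
        ω p.1 p.2) = ⊤)
    (χ : EuclideanSpace ℝ (Fin d₁) × EuclideanSpace ℝ (Fin d₂) → ℝ)
    (hχcont : Continuous χ)
    (hχpos : ∀ p, 0 < χ p)
    (hχmul : ∀ g h, χ (gmul ω g h) = χ g * χ h) :
    ∃ v : EuclideanSpace ℝ (Fin d₁),
      (∀ (x : EuclideanSpace ℝ (Fin d₁)) (u : EuclideanSpace ℝ (Fin d₂)),
        χ (x, u) = Real.exp ⟪v, x⟫) ∧
      (∀ u : EuclideanSpace ℝ (Fin d₂), χ (0, u) = 1) := by
  classical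
  -- antisymmetry of ω
  have hanti : ∀ x y, ω y x = - ω x y := by
    intro x y
    have h := halt (x + y)
    simp only [map_add, LinearMap.add_apply, halt, zero_add, add_zero] at h
    exact eq_neg_of_add_eq_zero_right (by linear_combination (norm := abel) h)
  -- χ(0,0) = 1
  have hzero : χ (0, 0) = 1 := by
    have h := hχmul (0, 0) (0, 0)
    simp only [gmul, map_zero, LinearMap.zero_apply, smul_zero, add_zero] at h
    have hp := hχpos (0, 0)
    nlinarith
  -- additivity on the second layer
  have hψadd : ∀ u s : EuclideanSpace ℝ (Fin d₂),
      χ (0, u + s) = χ (0, u) * χ (0, s) := by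
    intro u s
    have h := hχmul (0, u) (0, s)
    simpa [gmul, map_zero] using h
  -- splitting
  have hsplit : ∀ (x : EuclideanSpace ℝ (Fin d₁)) (u : EuclideanSpace ℝ (Fin d₂)),
      χ (x, u) = χ (x, 0) * χ (0, u) := by
    intro x u
    have h := hχmul (x, 0) (0, u)
    simpa [gmul, map_zero] using h
  -- χ(0, ·) is trivial on the range of ω
  have hψω : ∀ x y, χ (0, ω x y) = 1 := by
    intro x y
    have h1 := hχmul (x, 0) (y, 0)
    have h2 := hχmul (y, 0) (x, 0)
    simp only [gmul, zero_add, add_zero] at h1 h2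
    rw [hanti x y, smul_neg, add_comm y x] at h2
    have heq : χ (x + y, (2⁻¹ : ℝ) • ω x y) = χ (x + y, -((2⁻¹ : ℝ) • ω x y)) := by
      rw [h1, h2, mul_comm]
    rw [hsplit (x + y) ((2⁻¹ : ℝ) • ω x y), hsplit (x + y) (-((2⁻¹ : ℝ) • ω x y))] at heq
    have hx0 : 0 < χ (x + y, 0) := hχpos _
    have heq2 : χ (0, (2⁻¹ : ℝ) • ω x y) = χ (0, -((2⁻¹ : ℝ) • ω x y)) :=
      mul_left_cancel₀ (ne_of_gt hx0) heq
    have hinv : χ (0, (2⁻¹ : ℝ) • ω x y) * χ (0, -((2⁻¹ : ℝ) • ω x y)) = 1 := by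
      rw [← hψadd]
      simpa using hzero
    have hhalf : χ (0, (2⁻¹ : ℝ) • ω x y) = 1 := by
      rw [← heq2] at hinv
      have hp := hχpos (0, (2⁻¹ : ℝ) • ω x y)
      nlinarith
    have hs : ((2⁻¹ : ℝ) • ω x y) + ((2⁻¹ : ℝ) • ω x y) = ω x y := by
      rw [← add_smul]; norm_num
    calc χ (0, ω x y)
        = χ (0, ((2⁻¹ : ℝ) • ω x y) + ((2⁻¹ : ℝ) • ω x y)) := by rw [hs]
      _ = 1 := by rw [hψadd, hhalf]; ring
  -- log of χ(0, ·) as a continuous linear functional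
  let L : EuclideanSpace ℝ (Fin d₂) →+ ℝ :=
    { toFun := fun u => Real.log (χ (0, u))
      map_zero' := by
        show Real.log (χ (0, 0)) = 0
        rw [hzero, Real.log_one]
      map_add' := fun u s => by
        show Real.log (χ (0, u + s)) = Real.log (χ (0, u)) + Real.log (χ (0, s))
        rw [hψadd, Real.log_mul (ne_of_gt (hχpos _)) (ne_of_gt (hχpos _))] }
  have hcont2 : Continuous fun u : EuclideanSpace ℝ (Fin d₂) => χ (0, u) :=
    hχcont.comp (continuous_const.prodMk continuous_id)
  have hLcont : Continuous fun u : EuclideanSpace ℝ (Fin d₂) => Real.log (χ (0, u)) :=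
    hcont2.log fun u => ne_of_gt (hχpos (0, u))
  let L' : EuclideanSpace ℝ (Fin d₂) →L[ℝ] ℝ := L.toRealLinearMap hLcont
  have hL'u : ∀ u, L' u = Real.log (χ (0, u)) := fun u => rfl
  have hL'zero : ∀ u, L' u = 0 := by
    have hker : Submodule.span ℝ
        (Set.range fun p : EuclideanSpace ℝ (Fin d₁) × EuclideanSpace ℝ (Fin d₁) =>
          ω p.1 p.2) ≤
        LinearMap.ker (L' : EuclideanSpace ℝ (Fin d₂) →ₗ[ℝ] ℝ) := by
      rw [Submodule.span_le]
      rintro _ ⟨p, rfl⟩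
      simp only [SetLike.mem_coe, LinearMap.mem_ker, ContinuousLinearMap.coe_coe]
      rw [hL'u, hψω, Real.log_one]
    intro u
    have hu : u ∈ Submodule.span ℝ
        (Set.range fun p : EuclideanSpace ℝ (Fin d₁) × EuclideanSpace ℝ (Fin d₁) =>
          ω p.1 p.2) := by rw [hspan]; exact Submodule.mem_top
    simpa using hker hu
  -- χ is trivial on the second layer
  have hψ1 : ∀ u, χ (0, u) = 1 := by
    intro u
    have h' : Real.log (χ (0, u)) = 0 := by rw [← hL'u]; exact hL'zero u
    have hexp := Real.exp_log (hχpos (0, u))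
    rw [h', Real.exp_zero] at hexp
    exact hexp.symm
  -- additivity on the first layer
  have hφadd : ∀ x y : EuclideanSpace ℝ (Fin d₁),
      χ (x + y, 0) = χ (x, 0) * χ (y, 0) := by
    intro x y
    have h := hχmul (x, 0) (y, 0)
    simp only [gmul, zero_add, add_zero] at h
    rw [hsplit (x + y) ((2⁻¹ : ℝ) • ω x y), hψ1, mul_one] at h
    exact h
  -- log of χ(·, 0) as a continuous linear functional
  let F : EuclideanSpace ℝ (Fin d₁) →+ ℝ :=
    { toFun := fun x => Real.log (χ (x, 0))
      map_zero' := by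
        show Real.log (χ (0, 0)) = 0
        rw [hzero, Real.log_one]
      map_add' := fun x y => by
        show Real.log (χ (x + y, 0)) = Real.log (χ (x, 0)) + Real.log (χ (y, 0))
        rw [hφadd, Real.log_mul (ne_of_gt (hχpos _)) (ne_of_gt (hχpos _))] }
  have hcont1 : Continuous fun x : EuclideanSpace ℝ (Fin d₁) => χ (x, 0) :=
    hχcont.comp (continuous_id.prodMk continuous_const)
  have hFcont : Continuous fun x : EuclideanSpace ℝ (Fin d₁) => Real.log (χ (x, 0)) :=
    hcont1.log fun x => ne_of_gt (hχpos (x, 0))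
  let F' : EuclideanSpace ℝ (Fin d₁) →L[ℝ] ℝ := F.toRealLinearMap hFcont
  refine ⟨(InnerProductSpace.toDual ℝ (EuclideanSpace ℝ (Fin d₁))).symm F', ?_, hψ1⟩
  intro x u
  have hv : ⟪(InnerProductSpace.toDual ℝ (EuclideanSpace ℝ (Fin d₁))).symm F', x⟫ = F' x :=
    InnerProductSpace.toDual_symm_apply
  rw [hv]
  have hF'x : F' x = Real.log (χ (x, 0)) := rfl
  rw [hF'x, Real.exp_log (hχpos _)]
  rw [hsplit, hψ1, mul_one]
end

section
/- Consider the two-step group model on ℝ^{d₁} × ℝ^{d₂}, and assume the range of ω spans ℝ^{d₂}. Let χ : ℝ^{d₁} × ℝ^{d₂} → ℝ be continuous, strictly positive, and multiplicative for the group law. Then there exists a constant c ≥ 0 such that χ(x,u) ≤ exp(c(|x| + |u|^{1/2})) for all (x,u) ∈ ℝ^{d₁} × ℝ^{d₂}. -/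
/-- Pointwise growth estimate for a continuous positive character of the two-step
group model: `χ(x,u) ≤ exp(c(|x| + |u|^{1/2}))` for some `c ≥ 0`. -/
theorem positive_character_growth (d₁ d₂ : ℕ) (hd₁ : 0 < d₁) (hd₂ : 0 < d₂)
    (ω : EuclideanSpace ℝ (Fin d₁) →ₗ[ℝ]
      (EuclideanSpace ℝ (Fin d₁) →ₗ[ℝ] EuclideanSpace ℝ (Fin d₂)))
    (halt : ∀ x : EuclideanSpace ℝ (Fin d₁), ω x x = 0)
    (hspan : Submodule.span ℝ
      (Set.range fun p : EuclideanSpace ℝ (Fin d₁) × EuclideanSpace ℝ (Fin d₁) =>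
        ω p.1 p.2) = ⊤)
    (χ : EuclideanSpace ℝ (Fin d₁) × EuclideanSpace ℝ (Fin d₂) → ℝ)
    (hχcont : Continuous χ)
    (hχpos : ∀ p, 0 < χ p)
    (hχmul : ∀ g h, χ (gmul ω g h) = χ g * χ h) :
    ∃ c : ℝ, 0 ≤ c ∧
      ∀ (x : EuclideanSpace ℝ (Fin d₁)) (u : EuclideanSpace ℝ (Fin d₂)),
        χ (x, u) ≤ Real.exp (c * (‖x‖ + Real.sqrt ‖u‖)) := by
  set f : EuclideanSpace ℝ (Fin d₁) × EuclideanSpace ℝ (Fin d₂) → ℝ :=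
    fun p => Real.log (χ p) with hf
  have hfadd : ∀ a b, f (gmul ω a b) = f a + f b := by
    intro a b
    simp only [hf, hχmul, Real.log_mul (hχpos a).ne' (hχpos b).ne']
  have hfcont : Continuous f := by
    rw [continuous_iff_continuousAt]
    intro p
    exact (Real.continuousAt_log (hχpos p).ne').comp hχcont.continuousAt
  -- skew-symmetry
  have hskew : ∀ x y, ω y x = - ω x y := by
    intro x y
    have h := halt (x + y)
    simp only [map_add, LinearMap.add_apply, halt x, halt y, zero_add, add_zero] at h
    exact eq_neg_of_add_eq_zero_left h
  -- the central part φ, additive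
  have hφadd : ∀ u v : EuclideanSpace ℝ (Fin d₂),
      f (0, u + v) = f (0, u) + f (0, v) := by
    intro u v
    have h := hfadd (0, u) (0, v)
    simp only [gmul, map_zero, LinearMap.zero_apply, smul_zero, add_zero] at h
    exact h
  set φ : EuclideanSpace ℝ (Fin d₂) →+ ℝ :=
    AddMonoidHom.mk' (fun u => f (0, u)) hφadd with hφdef
  have hφcont : Continuous φ := hfcont.comp (Continuous.prodMk_right 0)
  -- f splits
  have hsplit : ∀ x u, f (x, u) = f (x, 0) + φ u := by
    intro x u
    have h := hfadd (x, 0) (0, u)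
    simp only [gmul, add_zero, zero_add, map_zero, smul_zero] at h
    rw [h]
    rfl
  -- multiplication of pure first-coordinate elements
  have hmul1 : ∀ x y, f (x, 0) + f (y, 0)
      = f (x + y, 0) + φ ((2⁻¹ : ℝ) • ω x y) := by
    intro x y
    have h := hfadd (x, 0) (y, 0)
    simp only [gmul, add_zero, zero_add] at h
    rw [← h, hsplit]
  -- φ vanishes on commutators
  have hφω0 : ∀ x y, φ (ω x y) = 0 := by
    intro x y
    have h1 := hmul1 x y
    have h2 := hmul1 y x
    have hxy : f (y + x, 0) = f (x + y, 0) := by rw [add_comm]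
    have h3 : φ ((2⁻¹ : ℝ) • ω x y) = φ ((2⁻¹ : ℝ) • ω y x) := by linarith
    rw [hskew x y, smul_neg, map_neg] at h3
    have h4 : φ ((2⁻¹ : ℝ) • ω x y) = 0 := by linarith
    have : ω x y = (2⁻¹ : ℝ) • ω x y + (2⁻¹ : ℝ) • ω x y := by
      rw [← add_smul]; norm_num
    rw [this, map_add, h4, add_zero]
  -- φ as a real-linear map
  have hφℝ : ∃ Φ : EuclideanSpace ℝ (Fin d₂) →ₗ[ℝ] ℝ, ∀ u, Φ u = φ u :=
    ⟨{ toFun := φ, map_add' := φ.map_add,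
       map_smul' := fun c u => by
         exact map_real_smul φ hφcont c u }, fun u => rfl⟩
  obtain ⟨Φ, hΦ⟩ := hφℝ
  -- Φ = 0 using the span hypothesis
  have hφ0 : ∀ u, φ u = 0 := by
    intro u
    have hker : Submodule.span ℝ
        (Set.range fun p : EuclideanSpace ℝ (Fin d₁) × EuclideanSpace ℝ (Fin d₁) =>
          ω p.1 p.2) ≤ LinearMap.ker Φ := by
      rw [Submodule.span_le]
      rintro _ ⟨⟨x, y⟩, rfl⟩
      simp only [SetLike.mem_coe, LinearMap.mem_ker]
      rw [hΦ]; exact hφω0 x y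
    rw [hspan, top_le_iff, LinearMap.ker_eq_top] at hker
    rw [← hΦ, hker]; rfl
  -- g := f(·,0) is additive and continuous, hence linear
  have hgadd : ∀ x y, f (x + y, 0) = f (x, 0) + f (y, 0) := by
    intro x y
    have := hmul1 x y
    rw [hφ0] at this
    linarith
  set g : EuclideanSpace ℝ (Fin d₁) →+ ℝ := AddMonoidHom.mk' (fun x => f (x, 0)) hgadd
    with hgdef
  have hgcont : Continuous g := hfcont.comp (continuous_id.prodMk continuous_const)
  set G : EuclideanSpace ℝ (Fin d₁) →ₗ[ℝ] ℝ :=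
    { toFun := g, map_add' := g.map_add,
      map_smul' := fun c u => map_real_smul g hgcont c u } with hGdef
  set Gc : EuclideanSpace ℝ (Fin d₁) →L[ℝ] ℝ := LinearMap.toContinuousLinearMap G
  refine ⟨‖Gc‖, norm_nonneg _, fun x u => ?_⟩
  have hfle : f (x, u) ≤ ‖Gc‖ * (‖x‖ + Real.sqrt ‖u‖) := by
    have h1 : f (x, u) = g x := by rw [hsplit, hφ0, add_zero]; rfl
    have h2 : g x ≤ ‖Gc‖ * ‖x‖ := by
      calc g x ≤ |Gc x| := le_abs_self _
        _ = ‖Gc x‖ := rfl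
        _ ≤ ‖Gc‖ * ‖x‖ := Gc.le_opNorm x
    have h3 : ‖Gc‖ * ‖x‖ ≤ ‖Gc‖ * (‖x‖ + Real.sqrt ‖u‖) := by
      apply mul_le_mul_of_nonneg_left _ (norm_nonneg _)
      have := Real.sqrt_nonneg ‖u‖
      linarith
    linarith [h1 ▸ h2]
  calc χ (x, u) = Real.exp (f (x, u)) := by
        rw [hf, Real.exp_log (hχpos (x, u))]
    _ ≤ Real.exp (‖Gc‖ * (‖x‖ + Real.sqrt ‖u‖)) := Real.exp_le_exp.mpr hfle
end

section
/- Let d₁, d₂ be positive integers and Q = d₁ + 2d₂. Let α, β ≥ 0 satisfy α + β > Q and α < d₁. Then there exists a constant C > 0 such that for every R > 0, ∫_{ℝ^{d₁}×ℝ^{d₂}} (1 + R(|x| + |u|^{1/2}))^{−β} (1 + R|x|)^{−α} dx du ≤ C R^{−Q}. -/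
open MeasureTheory ENNReal

lemma lint_scale {n : ℕ} (g : EuclideanSpace ℝ (Fin n) → ℝ≥0∞) (hg : Measurable g)
    {c : ℝ} (hc : 0 < c) :
    ∫⁻ x, g x = ENNReal.ofReal (c ^ n) * ∫⁻ x, g (c • x) := by
  have h1 : ∫⁻ x, g (c • x) ∂(volume : Measure (EuclideanSpace ℝ (Fin n)))
      = ∫⁻ y, g y ∂(Measure.map (c • ·) volume) := by
    rw [lintegral_map hg (measurable_const_smul c)]
  rw [h1, Measure.map_addHaar_smul volume hc.ne', lintegral_smul_measure, smul_eq_mul, ← mul_assoc,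
    finrank_euclideanSpace_fin, abs_of_nonneg (by positivity),
    ← ENNReal.ofReal_mul (by positivity),
    mul_inv_cancel₀ (by positivity), ENNReal.ofReal_one, one_mul]


/-- Integral estimate with homogeneous-norm and first-layer weights (Lemma 2.3):
if `α + β > Q` and `0 ≤ α < d₁`, then
`∫ (1 + R(|x|+|u|^{1/2}))^{−β} (1 + R|x|)^{−α} dx du ≤ C R^{−Q}` for all `R > 0`. -/
theorem weighted_integral_bound (d₁ d₂ : ℕ) (hd₁ : 0 < d₁) (hd₂ : 0 < d₂)
    (α β : ℝ) (hα0 : 0 ≤ α) (hβ0 : 0 ≤ β)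
    (hQ : (d₁ : ℝ) + 2 * d₂ < α + β) (hα1 : α < d₁) :
    ∃ C : ℝ, 0 < C ∧ ∀ R : ℝ, 0 < R →
      (∫ p : EuclideanSpace ℝ (Fin d₁) × EuclideanSpace ℝ (Fin d₂),
        (1 + R * (‖p.1‖ + Real.sqrt ‖p.2‖)) ^ (-β) * (1 + R * ‖p.1‖) ^ (-α))
      ≤ C * R ^ (-((d₁ : ℝ) + 2 * d₂)) := by
  set γ : ℝ := α + β - 2 * d₂ with hγ_def
  have hγ : (d₁ : ℝ) < γ := by simp only [hγ_def]; linarith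
  have hβ2 : (d₂ : ℝ) < β / 2 := by linarith
  set K₁ : ℝ≥0∞ := ∫⁻ y : EuclideanSpace ℝ (Fin d₁), ENNReal.ofReal ((1 + ‖y‖) ^ (-γ)) with hK₁def
  set K₂ : ℝ≥0∞ := ∫⁻ v : EuclideanSpace ℝ (Fin d₂),
      ENNReal.ofReal ((1 + Real.sqrt ‖v‖) ^ (-β)) with hK₂def
  have hK₁ : K₁ < ∞ := finite_integral_one_add_norm (by rwa [finrank_euclideanSpace_fin])
  have key : ∀ t : ℝ, 0 ≤ t → (1 + Real.sqrt t) ^ (-β) ≤ (1 + t) ^ (-(β / 2)) := by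
    intro t ht
    have hs := Real.sqrt_nonneg t
    have h1 : (1 + t) ^ ((1:ℝ) / 2) ≤ 1 + Real.sqrt t := by
      rw [← Real.sqrt_eq_rpow]
      rw [show (1:ℝ) + Real.sqrt t = Real.sqrt ((1 + Real.sqrt t) ^ 2) from
        (Real.sqrt_sq (by positivity)).symm]
      exact Real.sqrt_le_sqrt (by nlinarith [Real.sq_sqrt ht])
    calc (1 + Real.sqrt t) ^ (-β) ≤ ((1 + t) ^ ((1:ℝ) / 2)) ^ (-β) :=
          Real.rpow_le_rpow_of_nonpos (by positivity) h1 (by linarith)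
      _ = (1 + t) ^ (-(β / 2)) := by rw [← Real.rpow_mul (by positivity)]; ring_nf
  have hK₂ : K₂ < ∞ := by
    calc K₂ ≤ ∫⁻ v : EuclideanSpace ℝ (Fin d₂), ENNReal.ofReal ((1 + ‖v‖) ^ (-(β / 2))) :=
          lintegral_mono fun v => ENNReal.ofReal_le_ofReal (key ‖v‖ (norm_nonneg v))
      _ < ∞ := finite_integral_one_add_norm (by rwa [finrank_euclideanSpace_fin])
  -- measurability of the v-integrand of K₂
  have hm2 : Measurable fun v : EuclideanSpace ℝ (Fin d₂) =>
      ENNReal.ofReal ((1 + Real.sqrt ‖v‖) ^ (-β)) := by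
    apply (ENNReal.continuous_ofReal.comp ?_).measurable
    exact (continuous_const.add (Real.continuous_sqrt.comp continuous_norm)).rpow_const
      fun v => Or.inl (by positivity : (0:ℝ) < 1 + Real.sqrt ‖v‖).ne'
  refine ⟨(K₁ * K₂).toReal + 1, by positivity, fun R hR => ?_⟩
  have hRQ : (0:ℝ) < R ^ (-((d₁ : ℝ) + 2 * d₂)) := Real.rpow_pos_of_pos hR _
  -- positivity of the base functions
  have hb1 : ∀ p : EuclideanSpace ℝ (Fin d₁) × EuclideanSpace ℝ (Fin d₂),
      0 < 1 + R * (‖p.1‖ + Real.sqrt ‖p.2‖) := fun p => by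
    have := mul_nonneg hR.le (add_nonneg (norm_nonneg p.1) (Real.sqrt_nonneg ‖p.2‖)); linarith
  have hb2 : ∀ x : EuclideanSpace ℝ (Fin d₁), 0 < 1 + R * ‖x‖ := fun x => by
    have := mul_nonneg hR.le (norm_nonneg x); linarith
  -- continuity of the real integrand
  have hc1 : Continuous fun p : EuclideanSpace ℝ (Fin d₁) × EuclideanSpace ℝ (Fin d₂) =>
      (1 + R * (‖p.1‖ + Real.sqrt ‖p.2‖)) ^ (-β) :=
    (continuous_const.add (continuous_const.mul ((continuous_norm.comp continuous_fst).add
      (Real.continuous_sqrt.comp (continuous_norm.comp continuous_snd))))).rpow_const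
      fun p => Or.inl (hb1 p).ne'
  have hc2 : Continuous fun p : EuclideanSpace ℝ (Fin d₁) × EuclideanSpace ℝ (Fin d₂) =>
      (1 + R * ‖p.1‖) ^ (-α) :=
    (continuous_const.add (continuous_const.mul (continuous_norm.comp continuous_fst))).rpow_const
      fun p => Or.inl (hb2 p.1).ne'
  have hfc : Continuous fun p : EuclideanSpace ℝ (Fin d₁) × EuclideanSpace ℝ (Fin d₂) =>
      (1 + R * (‖p.1‖ + Real.sqrt ‖p.2‖)) ^ (-β) * (1 + R * ‖p.1‖) ^ (-α) := hc1.mul hc2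
  have hFm : Measurable fun p : EuclideanSpace ℝ (Fin d₁) × EuclideanSpace ℝ (Fin d₂) =>
      ENNReal.ofReal ((1 + R * (‖p.1‖ + Real.sqrt ‖p.2‖)) ^ (-β) * (1 + R * ‖p.1‖) ^ (-α)) :=
    (ENNReal.continuous_ofReal.comp hfc).measurable
  -- inner integral computation
  have inner : ∀ x : EuclideanSpace ℝ (Fin d₁),
      (∫⁻ u : EuclideanSpace ℝ (Fin d₂),
        ENNReal.ofReal ((1 + R * (‖x‖ + Real.sqrt ‖u‖)) ^ (-β) * (1 + R * ‖x‖) ^ (-α)))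
      = ENNReal.ofReal ((1 + R * ‖x‖) ^ (-γ) * (R ^ (2 * d₂))⁻¹) * K₂ := by
    intro x
    set a : ℝ := 1 + R * ‖x‖ with ha_def
    have ha : 0 < a := hb2 x
    set c : ℝ := a / R with hc_def
    have hc0 : 0 < c := div_pos ha hR
    set h : EuclideanSpace ℝ (Fin d₂) → ℝ≥0∞ :=
      fun u => ENNReal.ofReal ((a + R * Real.sqrt ‖u‖) ^ (-β)) with hh_def
    have hmeash : Measurable h := by
      apply (ENNReal.continuous_ofReal.comp ?_).measurable
      refine (continuous_const.add (continuous_const.mul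
        (Real.continuous_sqrt.comp continuous_norm))).rpow_const fun u => Or.inl ?_
      have := mul_nonneg hR.le (Real.sqrt_nonneg ‖u‖)
      exact (by linarith : (0:ℝ) < a + R * Real.sqrt ‖u‖).ne'
    have step1 : ∀ u : EuclideanSpace ℝ (Fin d₂),
        ENNReal.ofReal ((1 + R * (‖x‖ + Real.sqrt ‖u‖)) ^ (-β) * (1 + R * ‖x‖) ^ (-α))
        = ENNReal.ofReal (a ^ (-α)) * h u := by
      intro u
      have hba : 1 + R * (‖x‖ + Real.sqrt ‖u‖) = a + R * Real.sqrt ‖u‖ := by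
        rw [ha_def]; ring
      rw [hba, hh_def, mul_comm, ENNReal.ofReal_mul (by positivity)]
    have hcomp : ∀ v : EuclideanSpace ℝ (Fin d₂), h ((c ^ 2 : ℝ) • v)
        = ENNReal.ofReal (a ^ (-β)) * ENNReal.ofReal ((1 + Real.sqrt ‖v‖) ^ (-β)) := by
      intro v
      have hn : ‖(c ^ 2 : ℝ) • v‖ = c ^ 2 * ‖v‖ := by
        rw [norm_smul, Real.norm_eq_abs, abs_of_nonneg (by positivity)]
      have hsq : Real.sqrt (c ^ 2 * ‖v‖) = c * Real.sqrt ‖v‖ := by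
        rw [Real.sqrt_mul (by positivity), Real.sqrt_sq hc0.le]
      have harr : a + R * (c * Real.sqrt ‖v‖) = a * (1 + Real.sqrt ‖v‖) := by
        rw [hc_def]; field_simp
      simp only [hh_def, hn, hsq, harr]
      rw [Real.mul_rpow ha.le (by positivity), ENNReal.ofReal_mul (by positivity)]
    have hint_h : ∫⁻ u, h u = ENNReal.ofReal ((c ^ 2) ^ d₂)
        * (ENNReal.ofReal (a ^ (-β)) * K₂) := by
      rw [lint_scale h hmeash (by positivity : (0:ℝ) < c ^ 2)]
      congr 1
      calc ∫⁻ v, h ((c ^ 2 : ℝ) • v)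
          = ∫⁻ v : EuclideanSpace ℝ (Fin d₂), ENNReal.ofReal (a ^ (-β))
              * ENNReal.ofReal ((1 + Real.sqrt ‖v‖) ^ (-β)) := by
            exact lintegral_congr hcomp
        _ = ENNReal.ofReal (a ^ (-β)) * K₂ := lintegral_const_mul _ hm2
    calc (∫⁻ u : EuclideanSpace ℝ (Fin d₂),
        ENNReal.ofReal ((1 + R * (‖x‖ + Real.sqrt ‖u‖)) ^ (-β) * (1 + R * ‖x‖) ^ (-α)))
        = ∫⁻ u, ENNReal.ofReal (a ^ (-α)) * h u := lintegral_congr step1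
      _ = ENNReal.ofReal (a ^ (-α)) * ∫⁻ u, h u := lintegral_const_mul _ hmeash
      _ = ENNReal.ofReal (a ^ (-α)) * (ENNReal.ofReal ((c ^ 2) ^ d₂)
            * (ENNReal.ofReal (a ^ (-β)) * K₂)) := by rw [hint_h]
      _ = ENNReal.ofReal (a ^ (-α) * ((c ^ 2) ^ d₂ * a ^ (-β))) * K₂ := by
          rw [ENNReal.ofReal_mul (by positivity), ENNReal.ofReal_mul (by positivity)]
          ring
      _ = ENNReal.ofReal (a ^ (-γ) * (R ^ (2 * d₂))⁻¹) * K₂ := by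
          congr 2
          have h2 : a ^ (-α) * a ^ (((2 * d₂ : ℕ) : ℝ)) * a ^ (-β) = a ^ (-γ) := by
            rw [← Real.rpow_add ha, ← Real.rpow_add ha]
            congr 1
            simp only [hγ_def]; push_cast; ring
          calc a ^ (-α) * ((c ^ 2) ^ d₂ * a ^ (-β))
              = a ^ (-α) * ((a ^ (2 * d₂) / R ^ (2 * d₂)) * a ^ (-β)) := by
                rw [hc_def, div_pow, div_pow, ← pow_mul, ← pow_mul]
            _ = (a ^ (-α) * a ^ (((2 * d₂ : ℕ) : ℝ)) * a ^ (-β)) * (R ^ (2 * d₂))⁻¹ := by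
                rw [Real.rpow_natCast]; ring
            _ = a ^ (-γ) * (R ^ (2 * d₂))⁻¹ := by rw [h2]
  -- outer measurability
  have hm1R : Measurable fun x : EuclideanSpace ℝ (Fin d₁) =>
      ENNReal.ofReal ((1 + R * ‖x‖) ^ (-γ)) := by
    apply (ENNReal.continuous_ofReal.comp ?_).measurable
    exact (continuous_const.add (continuous_const.mul continuous_norm)).rpow_const
      fun x => Or.inl (hb2 x).ne'
  -- outer integral computation
  have outer : (∫⁻ x : EuclideanSpace ℝ (Fin d₁), ENNReal.ofReal ((1 + R * ‖x‖) ^ (-γ)))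
      = ENNReal.ofReal ((R⁻¹) ^ d₁) * K₁ := by
    rw [lint_scale _ hm1R (inv_pos.mpr hR)]
    congr 1
    refine lintegral_congr fun y => ?_
    congr 2
    rw [norm_smul, Real.norm_eq_abs, abs_of_nonneg (inv_pos.mpr hR).le, ← mul_assoc,
      mul_inv_cancel₀ hR.ne', one_mul]
  -- total lintegral
  have main : (∫⁻ p : EuclideanSpace ℝ (Fin d₁) × EuclideanSpace ℝ (Fin d₂),
      ENNReal.ofReal ((1 + R * (‖p.1‖ + Real.sqrt ‖p.2‖)) ^ (-β) * (1 + R * ‖p.1‖) ^ (-α)))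
      = ENNReal.ofReal (R ^ (-((d₁ : ℝ) + 2 * d₂))) * (K₁ * K₂) := by
    have hpow : (R⁻¹) ^ d₁ * (R ^ (2 * d₂))⁻¹ = R ^ (-((d₁ : ℝ) + 2 * d₂)) := by
      rw [inv_pow, ← mul_inv, ← pow_add, ← Real.rpow_natCast R (d₁ + 2 * d₂),
        ← Real.rpow_neg hR.le]
      congr 1; push_cast; ring
    calc (∫⁻ p : EuclideanSpace ℝ (Fin d₁) × EuclideanSpace ℝ (Fin d₂),
        ENNReal.ofReal ((1 + R * (‖p.1‖ + Real.sqrt ‖p.2‖)) ^ (-β) * (1 + R * ‖p.1‖) ^ (-α)))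
        = ∫⁻ x : EuclideanSpace ℝ (Fin d₁), ∫⁻ u : EuclideanSpace ℝ (Fin d₂),
            ENNReal.ofReal ((1 + R * (‖x‖ + Real.sqrt ‖u‖)) ^ (-β) * (1 + R * ‖x‖) ^ (-α)) := by
          rw [← lintegral_prod _ hFm.aemeasurable, ← Measure.volume_eq_prod]
      _ = ∫⁻ x : EuclideanSpace ℝ (Fin d₁),
            ENNReal.ofReal ((1 + R * ‖x‖) ^ (-γ)) * ENNReal.ofReal ((R ^ (2 * d₂))⁻¹) * K₂ := by
          refine lintegral_congr fun x => ?_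
          rw [inner x, ENNReal.ofReal_mul (by positivity)]
      _ = (∫⁻ x : EuclideanSpace ℝ (Fin d₁), ENNReal.ofReal ((1 + R * ‖x‖) ^ (-γ)))
            * (ENNReal.ofReal ((R ^ (2 * d₂))⁻¹) * K₂) := by
          simp_rw [mul_assoc]
          exact lintegral_mul_const _ hm1R
      _ = (ENNReal.ofReal ((R⁻¹) ^ d₁) * K₁) * (ENNReal.ofReal ((R ^ (2 * d₂))⁻¹) * K₂) := by
          rw [outer]
      _ = ENNReal.ofReal (R ^ (-((d₁ : ℝ) + 2 * d₂))) * (K₁ * K₂) := by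
          rw [← hpow, ENNReal.ofReal_mul (by positivity)]
          ring
  -- from Bochner integral to lintegral
  have hnn : (0 : EuclideanSpace ℝ (Fin d₁) × EuclideanSpace ℝ (Fin d₂) → ℝ)
      ≤ᵐ[volume] fun p => (1 + R * (‖p.1‖ + Real.sqrt ‖p.2‖)) ^ (-β) * (1 + R * ‖p.1‖) ^ (-α) :=
    Filter.Eventually.of_forall fun p => by positivity
  rw [integral_eq_lintegral_of_nonneg_ae hnn hfc.aestronglyMeasurable, main,
    ENNReal.toReal_mul, ENNReal.toReal_ofReal hRQ.le]
  have h3 : (K₁ * K₂).toReal ≤ (K₁ * K₂).toReal + 1 := by linarith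
  nlinarith [ENNReal.toReal_nonneg (a := K₁ * K₂)]
end
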